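/- For all κ₁ ≥ κ₀ > 0 there exists C > 1, depending only on κ₀ and κ₁, such that the following holds. Let γ : ℝ → ℝ² be C² with γ(s + 1) = γ(s) and ‖γ'(s)‖ = 1 for all s, with curvature κ(s) := det(γ'(s), γ''(s)) satisfying κ₀ ≤ κ(s) ≤ κ₁ for all s and ∫₀¹ κ(s) ds = 2π. Then for all s₁, s₂ ∈ ℝ with s₂ - s₁ ∉ ℤ, C⁻¹·dist_𝕋(s₁, s₂)·‖γ(s₂) - γ(s₁)‖ ≤ |det(γ'(s₁), γ(s₂) - γ(s₁))| ≤ C·dist_𝕋(s₁, s₂)·‖γ(s₂) - γ(s₁)‖; that is, the sine of the angle between the tangent γ'(s₁) and the chord γ(s₂) - γ(s₁) is comparable to dist_𝕋(s₁, s₂). -/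

import Mathlib

open Real

/-- Distance on the circle `ℝ/ℤ`: `dist_𝕋(s₁, s₂) = min_{n ∈ ℤ} |s₂ - s₁ - n|`. -/
noncomputable def distT (s₁ s₂ : ℝ) : ℝ := ⨅ n : ℤ, |s₂ - s₁ - (n : ℝ)|

/-- The (signed) curvature `κ(s) = det(γ'(s), γ''(s))` of a unit-speed plane curve. -/
noncomputable def curv (γ : ℝ → EuclideanSpace ℝ (Fin 2)) (s : ℝ) : ℝ :=
  deriv γ s 0 * deriv (deriv γ) s 1 - deriv γ s 1 * deriv (deriv γ) s 0

open intervalIntegral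


lemma exists_angle (a b : ℝ) (h : a^2 + b^2 = 1) : ∃ θ, a = Real.cos θ ∧ b = Real.sin θ := by
  have ha : |a| ≤ 1 := by nlinarith [sq_nonneg a, sq_nonneg b, abs_nonneg a, sq_abs a]
  rcases le_or_gt 0 b with hb | hb
  · refine ⟨Real.arccos a, (Real.cos_arccos (by linarith [abs_le.mp ha]) (by linarith [abs_le.mp ha])).symm, ?_⟩
    rw [Real.sin_arccos]
    rw [show 1 - a^2 = b^2 by linarith, Real.sqrt_sq hb]
  · refine ⟨-Real.arccos a, ?_, ?_⟩
    · rw [Real.cos_neg, Real.cos_arccos (by linarith [abs_le.mp ha]) (by linarith [abs_le.mp ha])]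
    · rw [Real.sin_neg, Real.sin_arccos, show 1 - a^2 = b^2 by linarith, Real.sqrt_sq_eq_abs,
        abs_of_neg hb, neg_neg]

lemma dot_le_sqrt (a b c s : ℝ) (h : c^2 + s^2 = 1) : a*c + b*s ≤ Real.sqrt (a^2 + b^2) := by
  have h0 : (0:ℝ) ≤ a^2+b^2 := by positivity
  have h1 : Real.sqrt (a^2+b^2) ^ 2 = a^2+b^2 := Real.sq_sqrt h0
  have h2 : 0 ≤ Real.sqrt (a^2+b^2) := Real.sqrt_nonneg _
  nlinarith [sq_nonneg (a - Real.sqrt (a^2+b^2) * c), sq_nonneg (b - Real.sqrt (a^2+b^2) * s),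
    sq_nonneg (a*s - b*c)]

set_option maxHeartbeats 2000000 in
lemma core (κ₀ κ₁ : ℝ) (h0 : 0 < κ₀) (h01 : κ₀ ≤ κ₁)
    (x y K : ℝ → ℝ)
    (hx : ContDiff ℝ 2 x) (hy : ContDiff ℝ 2 y)
    (hKdef : ∀ s, K s = deriv x s * deriv (deriv y) s - deriv y s * deriv (deriv x) s)
    (hperx : x 1 = x 0) (hpery : y 1 = y 0)
    (hunit : ∀ s, (deriv x s)^2 + (deriv y s)^2 = 1)
    (hκl : ∀ s, κ₀ ≤ K s) (hκu : ∀ s, K s ≤ κ₁)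
    (htot : (∫ s in (0:ℝ)..1, K s) = 2*π)
    (u : ℝ) (hu0 : 0 < u) (hu1 : u < 1) :
    min (κ₀/π) (κ₀*π/κ₁^2) * (min u (1-u))^2
        ≤ deriv x 0 * (y u - y 0) - deriv y 0 * (x u - x 0) ∧
    deriv x 0 * (y u - y 0) - deriv y 0 * (x u - x 0) ≤ (κ₁/2) * (min u (1-u))^2 ∧
    min (2*κ₀/(π*κ₁)) (κ₀*π/(2*κ₁^2)) * min u (1-u)
        ≤ Real.sqrt ((x u - x 0)^2 + (y u - y 0)^2) ∧
    Real.sqrt ((x u - x 0)^2 + (y u - y 0)^2) ≤ min u (1-u) := by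
  have hπ : (0:ℝ) < π := Real.pi_pos
  have hκ₁ : (0:ℝ) < κ₁ := lt_of_lt_of_le h0 h01
  -- regularity
  have hx2 : ContDiff ℝ (1+1) x := by norm_num [hx]
  have hy2 : ContDiff ℝ (1+1) y := by norm_num [hy]
  obtain ⟨hxd, -, hx1⟩ := contDiff_succ_iff_deriv.mp hx2
  obtain ⟨hyd, -, hy1⟩ := contDiff_succ_iff_deriv.mp hy2
  obtain ⟨hdxd, hddxc⟩ := contDiff_one_iff_deriv.mp hx1
  obtain ⟨hdyd, hddyc⟩ := contDiff_one_iff_deriv.mp hy1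
  have hdxc : Continuous (deriv x) := hx1.continuous
  have hdyc : Continuous (deriv y) := hy1.continuous
  have hKc : Continuous K := by
    have : K = fun s => deriv x s * deriv (deriv y) s - deriv y s * deriv (deriv x) s :=
      funext hKdef
    rw [this]
    exact ((hdxc.mul hddyc).sub (hdyc.mul hddxc))
  -- Θ
  set Θ : ℝ → ℝ := fun t => ∫ s in (0:ℝ)..t, K s with hΘdef
  have hΘd : ∀ t, HasDerivAt Θ (K t) t := by
    intro t
    exact intervalIntegral.integral_hasDerivAt_right (hKc.intervalIntegrable _ _)
      (hKc.stronglyMeasurableAtFilter _ _) hKc.continuousAt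
  have hΘc : Continuous Θ :=
    continuous_iff_continuousAt.mpr fun t => ((hΘd t).differentiableAt).continuousAt
  have hΘ0 : Θ 0 = 0 := intervalIntegral.integral_same
  have hΘ1 : Θ 1 = 2*π := htot
  have hKi : ∀ a b : ℝ, IntervalIntegrable K MeasureTheory.volume a b :=
    fun a b => hKc.intervalIntegrable a b
  have hΘsub : ∀ a b : ℝ, Θ b - Θ a = ∫ s in a..b, K s := by
    intro a b
    simp only [hΘdef]
    rw [← intervalIntegral.integral_interval_sub_left (hKi 0 b) (hKi 0 a)]
  have hΘlb : ∀ a b : ℝ, a ≤ b → κ₀ * (b - a) ≤ Θ b - Θ a := by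
    intro a b hab
    rw [hΘsub]
    have : κ₀ * (b - a) = ∫ _ in a..b, κ₀ := by simp [smul_eq_mul, mul_comm]
    rw [this]
    exact intervalIntegral.integral_mono_on hab (intervalIntegrable_const)
      (hKi a b) (fun t _ => hκl t)
  have hΘub : ∀ a b : ℝ, a ≤ b → Θ b - Θ a ≤ κ₁ * (b - a) := by
    intro a b hab
    rw [hΘsub]
    have : κ₁ * (b - a) = ∫ _ in a..b, κ₁ := by simp [smul_eq_mul, mul_comm]
    rw [this]
    exact intervalIntegral.integral_mono_on hab (hKi a b)
      (intervalIntegrable_const) (fun t _ => hκu t)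
  -- second derivative identities
  have hsum : ∀ s, deriv x s * deriv (deriv x) s + deriv y s * deriv (deriv y) s = 0 := by
    intro s
    have hconst : deriv (fun s => (deriv x s)^2 + (deriv y s)^2) s = 0 := by
      have : (fun s => (deriv x s)^2 + (deriv y s)^2) = fun _ => (1:ℝ) := funext hunit
      rw [this]; simp
    have hD : HasDerivAt (fun s => (deriv x s)^2 + (deriv y s)^2)
        (2 * deriv x s ^ 1 * deriv (deriv x) s + 2 * deriv y s ^ 1 * deriv (deriv y) s) s :=
      (((hdxd s).hasDerivAt.pow 2).add ((hdyd s).hasDerivAt.pow 2)).congr_deriv (by norm_num)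
    have := hD.deriv
    rw [hconst] at this
    nlinarith [this]
  have hxpp : ∀ s, deriv (deriv x) s = -(K s) * deriv y s := by
    intro s
    have h1 := hunit s; have h2 := hsum s; have h3 := hKdef s
    linear_combination (-(deriv (deriv x) s)) * h1 + (deriv x s) * h2 + (deriv y s) * h3
  have hypp : ∀ s, deriv (deriv y) s = K s * deriv x s := by
    intro s
    have h1 := hunit s; have h2 := hsum s; have h3 := hKdef s
    linear_combination (-(deriv (deriv y) s)) * h1 + (deriv y s) * h2 + (-(deriv x s)) * h3
  -- angle and ODE
  obtain ⟨θ₀, hc0, hs0⟩ := exists_angle _ _ (hunit 0)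
  set A : ℝ → ℝ := fun t => Real.cos (θ₀ + Θ t) with hA
  set B : ℝ → ℝ := fun t => Real.sin (θ₀ + Θ t) with hB
  have hAd : ∀ t, HasDerivAt A (-(K t) * B t) t := by
    intro t
    have := ((hΘd t).const_add θ₀).cos
    convert this using 1
    simp only [hB]; ring
  have hBd : ∀ t, HasDerivAt B (K t * A t) t := by
    intro t
    have := ((hΘd t).const_add θ₀).sin
    convert this using 1
    simp only [hA]; ring
  set W : ℝ → ℝ := fun t => (deriv x t - A t)^2 + (deriv y t - B t)^2 with hW
  have hWd : ∀ t, HasDerivAt W 0 t := by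
    intro t
    have d1 : HasDerivAt (deriv x) (deriv (deriv x) t) t := (hdxd t).hasDerivAt
    have d2 : HasDerivAt (deriv y) (deriv (deriv y) t) t := (hdyd t).hasDerivAt
    have hD := (((d1.sub (hAd t)).pow 2).add ((d2.sub (hBd t)).pow 2))
    refine HasDerivAt.congr_deriv (f := W) hD ?_
    rw [hxpp t, hypp t]; simp only [Pi.sub_apply]; push_cast; ring
  have hW0 : W 0 = 0 := by
    simp only [hW, hA, hB, hΘ0, add_zero, ← hc0, ← hs0]
    ring
  have hWt : ∀ t, W t = 0 := by
    intro t
    have := is_const_of_deriv_eq_zero (fun s => (hWd s).differentiableAt)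
      (fun s => (hWd s).deriv) t 0
    rw [this, hW0]
  have hdxA : ∀ t, deriv x t = A t := by
    intro t
    have h1 := hWt t
    simp only [hW] at h1
    have h2 : (deriv x t - A t)^2 = 0 := by
      nlinarith [sq_nonneg (deriv x t - A t), sq_nonneg (deriv y t - B t)]
    have := sq_eq_zero_iff.mp h2
    linarith [sub_eq_zero.mp this]
  have hdyB : ∀ t, deriv y t = B t := by
    intro t
    have h1 := hWt t
    simp only [hW] at h1
    have h2 : (deriv y t - B t)^2 = 0 := by
      nlinarith [sq_nonneg (deriv x t - A t), sq_nonneg (deriv y t - B t)]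
    have := sq_eq_zero_iff.mp h2
    linarith [sub_eq_zero.mp this]
  -- FTC and the functions F, G
  have hsinc : Continuous fun t => Real.sin (Θ t) := Real.continuous_sin.comp hΘc
  have hcosc : Continuous fun t => Real.cos (Θ t) := Real.continuous_cos.comp hΘc
  have hsini : ∀ a b : ℝ, IntervalIntegrable (fun t => Real.sin (Θ t)) MeasureTheory.volume a b :=
    fun a b => hsinc.intervalIntegrable a b
  have hcosi : ∀ a b : ℝ, IntervalIntegrable (fun t => Real.cos (Θ t)) MeasureTheory.volume a b :=
    fun a b => hcosc.intervalIntegrable a b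
  have hsin2c : Continuous fun t : ℝ => Real.sin (2*π - Θ t) :=
    Real.continuous_sin.comp (continuous_const.sub hΘc)
  have hsin2i : ∀ a b : ℝ, IntervalIntegrable (fun t => Real.sin (2*π - Θ t))
      MeasureTheory.volume a b := fun a b => hsin2c.intervalIntegrable a b
  have hcKc : Continuous fun t : ℝ => Real.cos (Θ t) * K t * κ₁⁻¹ :=
    (hcosc.mul hKc).mul continuous_const
  set Fv : ℝ → ℝ := fun v => ∫ t in (0:ℝ)..v, Real.sin (Θ t) with hFv
  set Gv : ℝ → ℝ := fun v => ∫ t in (0:ℝ)..v, Real.cos (Θ t) with hGv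
  have hxFTC : ∀ v : ℝ, x v - x 0 = Real.cos θ₀ * Gv v - Real.sin θ₀ * Fv v := by
    intro v
    have hder : ∀ t ∈ Set.uIcc (0:ℝ) v, HasDerivAt x (Real.cos (θ₀ + Θ t)) t := by
      intro t _
      have := (hxd t).hasDerivAt
      rwa [hdxA t] at this
    have hint : IntervalIntegrable (fun t => Real.cos (θ₀ + Θ t)) MeasureTheory.volume 0 v :=
      (Real.continuous_cos.comp (continuous_const.add hΘc)).intervalIntegrable _ _
    have heq := intervalIntegral.integral_eq_sub_of_hasDerivAt hder hint
    rw [← heq]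
    have hcong : ∀ t ∈ Set.uIcc (0:ℝ) v, Real.cos (θ₀ + Θ t)
        = Real.cos θ₀ * Real.cos (Θ t) - Real.sin θ₀ * Real.sin (Θ t) :=
      fun t _ => Real.cos_add _ _
    rw [intervalIntegral.integral_congr hcong, intervalIntegral.integral_sub
      (f := fun t => Real.cos θ₀ * Real.cos (Θ t)) (g := fun t => Real.sin θ₀ * Real.sin (Θ t))
      ((continuous_const.mul hcosc).intervalIntegrable _ _)
      ((continuous_const.mul hsinc).intervalIntegrable _ _),
      intervalIntegral.integral_const_mul, intervalIntegral.integral_const_mul]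
  have hyFTC : ∀ v : ℝ, y v - y 0 = Real.sin θ₀ * Gv v + Real.cos θ₀ * Fv v := by
    intro v
    have hder : ∀ t ∈ Set.uIcc (0:ℝ) v, HasDerivAt y (Real.sin (θ₀ + Θ t)) t := by
      intro t _
      have := (hyd t).hasDerivAt
      rwa [hdyB t] at this
    have hint : IntervalIntegrable (fun t => Real.sin (θ₀ + Θ t)) MeasureTheory.volume 0 v :=
      (Real.continuous_sin.comp (continuous_const.add hΘc)).intervalIntegrable _ _
    have heq := intervalIntegral.integral_eq_sub_of_hasDerivAt hder hint
    rw [← heq]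
    have hcong : ∀ t ∈ Set.uIcc (0:ℝ) v, Real.sin (θ₀ + Θ t)
        = Real.sin θ₀ * Real.cos (Θ t) + Real.cos θ₀ * Real.sin (Θ t) :=
      fun t _ => Real.sin_add _ _
    rw [intervalIntegral.integral_congr hcong, intervalIntegral.integral_add
      (f := fun t => Real.sin θ₀ * Real.cos (Θ t)) (g := fun t => Real.cos θ₀ * Real.sin (Θ t))
      ((continuous_const.mul hcosc).intervalIntegrable _ _)
      ((continuous_const.mul hsinc).intervalIntegrable _ _),
      intervalIntegral.integral_const_mul, intervalIntegral.integral_const_mul]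
  have htarget : deriv x 0 * (y u - y 0) - deriv y 0 * (x u - x 0) = Fv u := by
    rw [hxFTC u, hyFTC u, hc0, hs0]
    linear_combination (Fv u) * (Real.sin_sq_add_cos_sq θ₀)
  have hchordsq : (x u - x 0)^2 + (y u - y 0)^2 = Fv u^2 + Gv u^2 := by
    rw [hxFTC u, hyFTC u]
    linear_combination (Fv u^2 + Gv u^2) * (Real.sin_sq_add_cos_sq θ₀)
  have hF1 : Fv 1 = 0 := by
    have e1 : Real.cos θ₀ * Gv 1 - Real.sin θ₀ * Fv 1 = 0 := by
      rw [← hxFTC 1, hperx]; ring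
    have e2 : Real.sin θ₀ * Gv 1 + Real.cos θ₀ * Fv 1 = 0 := by
      rw [← hyFTC 1, hpery]; ring
    linear_combination Real.cos θ₀ * e2 - Real.sin θ₀ * e1 - Fv 1 * (Real.sin_sq_add_cos_sq θ₀)
  have hG1 : Gv 1 = 0 := by
    have e1 : Real.cos θ₀ * Gv 1 - Real.sin θ₀ * Fv 1 = 0 := by
      rw [← hxFTC 1, hperx]; ring
    have e2 : Real.sin θ₀ * Gv 1 + Real.cos θ₀ * Fv 1 = 0 := by
      rw [← hyFTC 1, hpery]; ring
    linear_combination Real.cos θ₀ * e1 + Real.sin θ₀ * e2 - Gv 1 * (Real.sin_sq_add_cos_sq θ₀)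
  have hFsub : ∀ v : ℝ, Fv v = - ∫ t in v..(1:ℝ), Real.sin (Θ t) := by
    intro v
    have : Fv 1 - Fv v = ∫ t in v..(1:ℝ), Real.sin (Θ t) := by
      simp only [hFv]
      rw [← intervalIntegral.integral_interval_sub_left (hsini 0 1) (hsini 0 v)]
    rw [hF1] at this; linarith
  have hGsub : ∀ v : ℝ, Gv v = - ∫ t in v..(1:ℝ), Real.cos (Θ t) := by
    intro v
    have : Gv 1 - Gv v = ∫ t in v..(1:ℝ), Real.cos (Θ t) := by
      simp only [hGv]
      rw [← intervalIntegral.integral_interval_sub_left (hcosi 0 1) (hcosi 0 v)]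
    rw [hG1] at this; linarith
  have hFalt : ∀ v : ℝ, Fv v = ∫ t in v..(1:ℝ), Real.sin (2*π - Θ t) := by
    intro v
    rw [hFsub v, ← intervalIntegral.integral_neg]
    apply intervalIntegral.integral_congr
    intro t _
    simp [Real.sin_sub]
  -- substitution integral
  have hsinsub : ∀ a b : ℝ, (∫ t in a..b, Real.cos (Θ t) * K t)
      = Real.sin (Θ b) - Real.sin (Θ a) := by
    intro a b
    apply intervalIntegral.integral_eq_sub_of_hasDerivAt
    · intro t _
      exact (hΘd t).sin
    · exact (hcosc.mul hKc).intervalIntegrable _ _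

  -- basic Θ facts
  have hΘpos : ∀ t : ℝ, 0 ≤ t → κ₀ * t ≤ Θ t := by
    intro t ht
    have := hΘlb 0 t ht
    rw [hΘ0] at this; linarith
  have hΘle : ∀ t : ℝ, 0 ≤ t → Θ t ≤ κ₁ * t := by
    intro t ht
    have := hΘub 0 t ht
    rw [hΘ0] at this; linarith
  have hΘrlb : ∀ t : ℝ, t ≤ 1 → κ₀ * (1-t) ≤ 2*π - Θ t := by
    intro t ht
    have := hΘlb t 1 ht
    rw [hΘ1] at this; linarith
  have hΘrub : ∀ t : ℝ, t ≤ 1 → 2*π - Θ t ≤ κ₁ * (1-t) := by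
    intro t ht
    have := hΘub t 1 ht
    rw [hΘ1] at this; linarith
  have hΘmono : ∀ a b : ℝ, a ≤ b → Θ a ≤ Θ b := by
    intro a b hab
    linarith [hΘlb a b hab, mul_nonneg h0.le (sub_nonneg.mpr hab)]
  have hΘnn : ∀ t : ℝ, 0 ≤ t → 0 ≤ Θ t := by
    intro t ht
    linarith [hΘpos t ht, mul_nonneg h0.le ht]
  have hΘrnn : ∀ t : ℝ, t ≤ 1 → Θ t ≤ 2*π := by
    intro t ht
    linarith [hΘrlb t ht, mul_nonneg h0.le (by linarith : (0:ℝ) ≤ 1 - t)]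
  -- lower bound on Fv, left version
  have L1 : ∀ v : ℝ, 0 ≤ v → Θ v ≤ π/2 → κ₀/π * v^2 ≤ Fv v := by
    intro v hv0 hvπ
    have hpt : ∀ t ∈ Set.Icc (0:ℝ) v, 2/π*κ₀*t ≤ Real.sin (Θ t) := by
      intro t ht
      obtain ⟨ht0, htv⟩ := ht
      have h1 : κ₀ * t ≤ Θ t := hΘpos t ht0
      have h3 : 0 ≤ Θ t := hΘnn t ht0
      have h4 := Real.mul_le_sin h3 (le_trans (hΘmono t v htv) hvπ)
      have h6 : (0:ℝ) ≤ 2/π := by positivity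
      have h5 : 2/π*κ₀*t ≤ 2/π * Θ t := by
        calc 2/π*κ₀*t = 2/π*(κ₀*t) := by ring
          _ ≤ 2/π * Θ t := mul_le_mul_of_nonneg_left h1 h6
      linarith
    have hmono := intervalIntegral.integral_mono_on hv0 (f := fun t : ℝ => 2/π*κ₀*t)
      ((continuous_const.mul continuous_id').intervalIntegrable _ _)
      (hsini 0 v) hpt
    rw [intervalIntegral.integral_const_mul, integral_id] at hmono
    have heq : 2/π*κ₀ * ((v^2 - 0^2)/2) = κ₀/π * v^2 := by
      field_simp; ring
    rw [heq] at hmono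
    exact hmono
  -- lower bound on Fv, right version
  have L1r : ∀ v : ℝ, v ≤ 1 → 2*π - Θ v ≤ π/2 → κ₀/π * (1-v)^2 ≤ Fv v := by
    intro v hv1 hvπ
    rw [hFalt v]
    have hpt : ∀ t ∈ Set.Icc v (1:ℝ), 2/π*κ₀*(1-t) ≤ Real.sin (2*π - Θ t) := by
      intro t ht
      obtain ⟨htv, ht1⟩ := ht
      have h1 : κ₀ * (1-t) ≤ 2*π - Θ t := hΘrlb t ht1
      have h3 : 0 ≤ 2*π - Θ t := by
        linarith [mul_nonneg h0.le (sub_nonneg.mpr ht1)]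
      have hub : 2*π - Θ t ≤ π/2 := by
        have := hΘmono v t htv
        linarith
      have h4 := Real.mul_le_sin h3 hub
      have h6 : (0:ℝ) ≤ 2/π := by positivity
      have h5 : 2/π*κ₀*(1-t) ≤ 2/π * (2*π - Θ t) := by
        calc 2/π*κ₀*(1-t) = 2/π*(κ₀*(1-t)) := by ring
          _ ≤ 2/π * (2*π - Θ t) := mul_le_mul_of_nonneg_left h1 h6
      linarith
    have hmono := intervalIntegral.integral_mono_on hv1 (f := fun t : ℝ => 2/π*κ₀*(1-t))
      ((continuous_const.mul (continuous_const.sub continuous_id')).intervalIntegrable _ _)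
      (hsin2i v 1) hpt
    have heq : (∫ t in v..(1:ℝ), 2/π*κ₀*(1-t)) = κ₀/π * (1-v)^2 := by
      rw [show (fun t : ℝ => 2/π*κ₀*(1-t)) = (fun t : ℝ => (2/π*κ₀)*(1-t)) from rfl]
      rw [intervalIntegral.integral_const_mul]
      rw [show (fun t : ℝ => (1:ℝ)-t) = (fun t : ℝ => id ((1:ℝ)-t)) from rfl]
      rw [intervalIntegral.integral_comp_sub_left id 1]
      simp only [sub_self, id]
      rw [integral_id]
      field_simp
      ring
    rw [heq] at hmono
    exact hmono
  -- lower bounds on |Gv|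
  have L2 : ∀ v : ℝ, 0 ≤ v → Θ v ≤ π/2 → Real.sin (Θ v) * κ₁⁻¹ ≤ Gv v := by
    intro v hv0 hvπ
    have hsub := hsinsub 0 v
    rw [hΘ0, Real.sin_zero, sub_zero] at hsub
    have hpt : ∀ t ∈ Set.Icc (0:ℝ) v, Real.cos (Θ t) * K t * κ₁⁻¹ ≤ Real.cos (Θ t) := by
      intro t ht
      obtain ⟨ht0, htv⟩ := ht
      have hcos : 0 ≤ Real.cos (Θ t) := by
        apply Real.cos_nonneg_of_mem_Icc
        constructor
        · have := hΘnn t ht0; linarith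
        · exact le_trans (hΘmono t v htv) hvπ
      have hle : K t * κ₁⁻¹ ≤ 1 := by
        rw [← div_eq_mul_inv]
        exact div_le_one_of_le₀ (hκu t) hκ₁.le
      calc Real.cos (Θ t) * K t * κ₁⁻¹ = Real.cos (Θ t) * (K t * κ₁⁻¹) := by ring
        _ ≤ Real.cos (Θ t) * 1 := mul_le_mul_of_nonneg_left hle hcos
        _ = Real.cos (Θ t) := mul_one _
    have hmono := intervalIntegral.integral_mono_on hv0
      (hcKc.intervalIntegrable _ _) (hcosi 0 v) hpt
    rw [intervalIntegral.integral_mul_const, hsub] at hmono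
    exact hmono
  have L2r : ∀ v : ℝ, v ≤ 1 → 3*π/2 ≤ Θ v → Real.sin (2*π - Θ v) * κ₁⁻¹ ≤ - Gv v := by
    intro v hv1 hv32
    have hsub := hsinsub v 1
    rw [hΘ1] at hsub
    have hs2π : Real.sin (2*π) = 0 := by simp [Real.sin_two_pi]
    rw [hs2π, zero_sub] at hsub
    have hpt : ∀ t ∈ Set.Icc v (1:ℝ), Real.cos (Θ t) * K t * κ₁⁻¹ ≤ Real.cos (Θ t) := by
      intro t ht
      obtain ⟨htv, ht1⟩ := ht
      have hcos : 0 ≤ Real.cos (Θ t) := by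
        rw [← Real.cos_sub_two_pi]
        apply Real.cos_nonneg_of_mem_Icc
        constructor
        · have := hΘmono v t htv; linarith
        · have := hΘrnn t ht1; linarith
      have hle : K t * κ₁⁻¹ ≤ 1 := by
        rw [← div_eq_mul_inv]
        exact div_le_one_of_le₀ (hκu t) hκ₁.le
      calc Real.cos (Θ t) * K t * κ₁⁻¹ = Real.cos (Θ t) * (K t * κ₁⁻¹) := by ring
        _ ≤ Real.cos (Θ t) * 1 := mul_le_mul_of_nonneg_left hle hcos
        _ = Real.cos (Θ t) := mul_one _
    have hmono := intervalIntegral.integral_mono_on hv1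
      (hcKc.intervalIntegrable _ _) (hcosi v 1) hpt
    rw [intervalIntegral.integral_mul_const, hsub] at hmono
    have hG := hGsub v
    rw [Real.sin_two_pi_sub]
    have : (∫ t in v..(1:ℝ), Real.cos (Θ t)) = - Gv v := by rw [hG]; ring
    rw [this] at hmono
    linarith [hmono]
  -- middle lower bound
  have Lmid : π/2 ≤ Θ u → Θ u ≤ 3*π/2 → κ₀*π/(4*κ₁^2) ≤ Fv u := by
    intro hl hr
    rcases le_or_gt (Θ u) π with hcase | hcase
    · set b' := π/(2*κ₁) with hb'
      have hb'0 : 0 < b' := by positivity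
      have hb'u : b' ≤ u := by
        have h1 := hΘle u hu0.le
        rw [hb', div_le_iff₀ (by positivity : (0:ℝ) < 2*κ₁)]
        nlinarith
      have hΘb' : Θ b' ≤ π/2 := by
        have := hΘle b' hb'0.le
        calc Θ b' ≤ κ₁ * (π/(2*κ₁)) := this
          _ = π/2 := by field_simp [hκ₁.ne']
      have hsplit : Fv u = Fv b' + ∫ t in b'..u, Real.sin (Θ t) := by
        exact (intervalIntegral.integral_add_adjacent_intervals (hsini 0 b') (hsini b' u)).symm
      have h1 : κ₀/π * b'^2 ≤ Fv b' := L1 b' hb'0.le hΘb'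
      have h2 : 0 ≤ ∫ t in b'..u, Real.sin (Θ t) := by
        apply intervalIntegral.integral_nonneg hb'u
        intro t ht
        obtain ⟨htb, htu⟩ := ht
        apply Real.sin_nonneg_of_nonneg_of_le_pi
        · exact hΘnn t (le_trans hb'0.le htb)
        · exact le_trans (hΘmono t u htu) hcase
      have heq : κ₀/π * b'^2 = κ₀*π/(4*κ₁^2) := by
        rw [hb']; field_simp; ring
      rw [heq] at h1
      linarith [hsplit, h1, h2]
    · set c' := (1:ℝ) - π/(2*κ₁) with hc'
      have hπκ : 0 < π/(2*κ₁) := by positivity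
      have huc' : u ≤ c' := by
        have h1 := hΘrub u hu1.le
        have h2 : π/2 ≤ 2*π - Θ u := by linarith
        have h3 : π/(2*κ₁) ≤ 1-u := by
          rw [div_le_iff₀ (by positivity : (0:ℝ) < 2*κ₁)]
          nlinarith
        rw [hc']; linarith
      have hc'1 : c' ≤ 1 := by rw [hc']; linarith
      have hΘc' : 2*π - Θ c' ≤ π/2 := by
        have := hΘrub c' hc'1
        calc 2*π - Θ c' ≤ κ₁ * (1-c') := this
          _ = π/2 := by rw [hc']; field_simp; ring
      have hsplit : Fv u = (∫ t in u..c', Real.sin (2*π - Θ t)) + Fv c' := by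
        rw [hFalt u, hFalt c']
        exact (intervalIntegral.integral_add_adjacent_intervals (hsin2i u c') (hsin2i c' 1)).symm
      have h1 : κ₀/π * (1-c')^2 ≤ Fv c' := L1r c' hc'1 hΘc'
      have h2 : 0 ≤ ∫ t in u..c', Real.sin (2*π - Θ t) := by
        apply intervalIntegral.integral_nonneg huc'
        intro t ht
        obtain ⟨htu, htc⟩ := ht
        apply Real.sin_nonneg_of_nonneg_of_le_pi
        · have := hΘrnn t (le_trans htc hc'1); linarith
        · have := hΘmono u t htu; linarith
      have heq : κ₀/π * (1-c')^2 = κ₀*π/(4*κ₁^2) := by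
        rw [hc']; field_simp; ring
      rw [heq] at h1
      linarith [hsplit, h1, h2]
  -- upper bounds
  have U1 : Fv u ≤ κ₁/2 * u^2 := by
    have hpt : ∀ t ∈ Set.Icc (0:ℝ) u, Real.sin (Θ t) ≤ κ₁ * t := by
      intro t ht
      obtain ⟨ht0, _⟩ := ht
      calc Real.sin (Θ t) ≤ Θ t := Real.sin_le (hΘnn t ht0)
        _ ≤ κ₁ * t := hΘle t ht0
    have hmono := intervalIntegral.integral_mono_on hu0.le (g := fun t : ℝ => κ₁*t) (hsini 0 u)
      ((continuous_const.mul continuous_id').intervalIntegrable _ _) hpt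
    rw [intervalIntegral.integral_const_mul, integral_id] at hmono
    calc Fv u ≤ κ₁ * ((u^2 - 0^2)/2) := hmono
      _ = κ₁/2 * u^2 := by ring
  have U2 : Fv u ≤ κ₁/2 * (1-u)^2 := by
    rw [hFalt u]
    have hpt : ∀ t ∈ Set.Icc u (1:ℝ), Real.sin (2*π - Θ t) ≤ κ₁*(1-t) := by
      intro t ht
      obtain ⟨_, ht1⟩ := ht
      have h3 : 0 ≤ 2*π - Θ t := by have := hΘrnn t ht1; linarith
      calc Real.sin (2*π - Θ t) ≤ 2*π - Θ t := Real.sin_le h3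
        _ ≤ κ₁ * (1-t) := hΘrub t ht1
    have hmono := intervalIntegral.integral_mono_on hu1.le (g := fun t : ℝ => κ₁*(1-t))
      (hsin2i u 1)
      ((continuous_const.mul (continuous_const.sub continuous_id')).intervalIntegrable _ _) hpt
    have heq : (∫ t in u..(1:ℝ), κ₁*(1-t)) = κ₁/2 * (1-u)^2 := by
      rw [show (fun t : ℝ => κ₁*(1-t)) = (fun t : ℝ => κ₁*((1:ℝ)-t)) from rfl]
      rw [intervalIntegral.integral_const_mul]
      rw [show (fun t : ℝ => (1:ℝ)-t) = (fun t : ℝ => id ((1:ℝ)-t)) from rfl]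
      rw [intervalIntegral.integral_comp_sub_left id 1]
      simp only [sub_self, id]
      rw [integral_id]
      ring
    rw [heq] at hmono
    exact hmono
  -- chord length
  set R := Real.sqrt (Fv u^2 + Gv u^2) with hR
  have hR0 : 0 ≤ R := Real.sqrt_nonneg _
  have hRsq : R^2 = Fv u^2 + Gv u^2 := Real.sq_sqrt (by positivity)
  have hdot1c : Continuous fun t : ℝ => Fv u * Real.sin (Θ t) + Gv u * Real.cos (Θ t) :=
    (continuous_const.mul hsinc).add (continuous_const.mul hcosc)
  have hdot2c : Continuous fun t : ℝ => (-Fv u) * Real.sin (Θ t) + (-Gv u) * Real.cos (Θ t) :=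
    (continuous_const.mul hsinc).add (continuous_const.mul hcosc)
  have D1 : R ≤ u := by
    have hpt : ∀ t ∈ Set.Icc (0:ℝ) u, Fv u * Real.sin (Θ t) + Gv u * Real.cos (Θ t) ≤ R := by
      intro t _
      exact dot_le_sqrt _ _ _ _ (Real.sin_sq_add_cos_sq (Θ t))
    have hmono := intervalIntegral.integral_mono_on hu0.le
      (hdot1c.intervalIntegrable _ _)
      (intervalIntegrable_const : IntervalIntegrable (fun _ => R) MeasureTheory.volume 0 u) hpt
    rw [intervalIntegral.integral_add
      (f := fun t => Fv u * Real.sin (Θ t)) (g := fun t => Gv u * Real.cos (Θ t))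
      ((continuous_const.mul hsinc).intervalIntegrable _ _)
      ((continuous_const.mul hcosc).intervalIntegrable _ _),
      intervalIntegral.integral_const_mul, intervalIntegral.integral_const_mul,
      intervalIntegral.integral_const] at hmono
    have hFr : (∫ t in (0:ℝ)..u, Real.sin (Θ t)) = Fv u := rfl
    have hGr : (∫ t in (0:ℝ)..u, Real.cos (Θ t)) = Gv u := rfl
    rw [hFr, hGr] at hmono
    simp only [sub_zero, smul_eq_mul] at hmono
    nlinarith [hmono, hRsq, hR0, hu0, sq_nonneg (R - u)]
  have D2 : R ≤ 1 - u := by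
    have hpt : ∀ t ∈ Set.Icc u (1:ℝ),
        (-Fv u) * Real.sin (Θ t) + (-Gv u) * Real.cos (Θ t) ≤ R := by
      intro t _
      have := dot_le_sqrt (-Fv u) (-Gv u) _ _ (Real.sin_sq_add_cos_sq (Θ t))
      rwa [show (-Fv u)^2 + (-Gv u)^2 = Fv u^2 + Gv u^2 by ring] at this
    have hmono := intervalIntegral.integral_mono_on hu1.le
      (hdot2c.intervalIntegrable _ _)
      (intervalIntegrable_const : IntervalIntegrable (fun _ => R) MeasureTheory.volume u 1) hpt
    rw [intervalIntegral.integral_add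
      (f := fun t => (-Fv u) * Real.sin (Θ t)) (g := fun t => (-Gv u) * Real.cos (Θ t))
      ((continuous_const.mul hsinc).intervalIntegrable _ _)
      ((continuous_const.mul hcosc).intervalIntegrable _ _),
      intervalIntegral.integral_const_mul, intervalIntegral.integral_const_mul,
      intervalIntegral.integral_const] at hmono
    have hFr : (∫ t in u..(1:ℝ), Real.sin (Θ t)) = - Fv u := by
      have := hFsub u; linarith
    have hGr : (∫ t in u..(1:ℝ), Real.cos (Θ t)) = - Gv u := by
      have := hGsub u; linarith
    rw [hFr, hGr] at hmono
    simp only [smul_eq_mul] at hmono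
    nlinarith [hmono, hRsq, hR0, hu0, hu1, sq_nonneg (R - (1-u))]
  have hRgeF : Fv u ≤ R := by
    calc Fv u ≤ |Fv u| := le_abs_self _
      _ = Real.sqrt (Fv u^2) := (Real.sqrt_sq_eq_abs _).symm
      _ ≤ R := Real.sqrt_le_sqrt (by nlinarith [sq_nonneg (Gv u)])
  have hRgeG : Gv u ≤ R := by
    calc Gv u ≤ |Gv u| := le_abs_self _
      _ = Real.sqrt (Gv u^2) := (Real.sqrt_sq_eq_abs _).symm
      _ ≤ R := Real.sqrt_le_sqrt (by nlinarith [sq_nonneg (Fv u)])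
  have hRgeNG : - Gv u ≤ R := by
    calc - Gv u ≤ |Gv u| := neg_le_abs _
      _ = Real.sqrt (Gv u^2) := (Real.sqrt_sq_eq_abs _).symm
      _ ≤ R := Real.sqrt_le_sqrt (by nlinarith [sq_nonneg (Fv u)])
  -- assembly
  set m := min u (1-u) with hm
  have hm0 : 0 < m := lt_min hu0 (by linarith)
  have hmu : m ≤ u := min_le_left _ _
  have hm1u : m ≤ 1-u := min_le_right _ _
  have hmhalf : m ≤ 1/2 := by linarith
  have hcA : 0 < min (κ₀/π) (κ₀*π/κ₁^2) := lt_min (by positivity) (by positivity)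
  have hc₁ : 0 < min (2*κ₀/(π*κ₁)) (κ₀*π/(2*κ₁^2)) := lt_min (by positivity) (by positivity)
  have hmain : min (κ₀/π) (κ₀*π/κ₁^2) * m^2 ≤ Fv u
      ∧ min (2*κ₀/(π*κ₁)) (κ₀*π/(2*κ₁^2)) * m ≤ R := by
    rcases le_or_gt (Θ u) (π/2) with hc1 | hc1
    · constructor
      · have h1 := L1 u hu0.le hc1
        have h2 : min (κ₀/π) (κ₀*π/κ₁^2) * m^2 ≤ κ₀/π * u^2 := by
          apply mul_le_mul (min_le_left _ _) (by nlinarith) (by positivity) (by positivity)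
        linarith
      · have h1 := L2 u hu0.le hc1
        have h2 : 0 ≤ Θ u := hΘnn u hu0.le
        have h3 := Real.mul_le_sin h2 hc1
        have h4 : κ₀ * u ≤ Θ u := hΘpos u hu0.le
        have h5 : 2*κ₀/(π*κ₁) * u ≤ Real.sin (Θ u) * κ₁⁻¹ := by
          have h6 : 2/π * (κ₀ * u) ≤ Real.sin (Θ u) := by
            have : 2/π * (κ₀*u) ≤ 2/π * Θ u := by
              apply mul_le_mul_of_nonneg_left h4 (by positivity)
            linarith
          calc 2*κ₀/(π*κ₁) * u = (2/π * (κ₀*u)) * κ₁⁻¹ := by field_simp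
            _ ≤ Real.sin (Θ u) * κ₁⁻¹ := by
              apply mul_le_mul_of_nonneg_right h6 (by positivity)
        have h7 : min (2*κ₀/(π*κ₁)) (κ₀*π/(2*κ₁^2)) * m ≤ 2*κ₀/(π*κ₁) * u :=
          mul_le_mul (min_le_left _ _) hmu hm0.le (by positivity)
        linarith [hRgeG]
    · rcases le_or_gt (3*π/2) (Θ u) with hc2 | hc2
      · constructor
        · have h1 := L1r u hu1.le (by linarith)
          have h2 : min (κ₀/π) (κ₀*π/κ₁^2) * m^2 ≤ κ₀/π * (1-u)^2 := by
            apply mul_le_mul (min_le_left _ _) (by nlinarith) (by positivity) (by positivity)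
          linarith
        · have h1 := L2r u hu1.le hc2
          have h2 : 0 ≤ 2*π - Θ u := by have := hΘrnn u hu1.le; linarith
          have h3 := Real.mul_le_sin h2 (by linarith : 2*π - Θ u ≤ π/2)
          have h4 : κ₀ * (1-u) ≤ 2*π - Θ u := hΘrlb u hu1.le
          have h5 : 2*κ₀/(π*κ₁) * (1-u) ≤ Real.sin (2*π - Θ u) * κ₁⁻¹ := by
            have h6 : 2/π * (κ₀*(1-u)) ≤ Real.sin (2*π - Θ u) := by
              have : 2/π * (κ₀*(1-u)) ≤ 2/π * (2*π - Θ u) := by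
                apply mul_le_mul_of_nonneg_left h4 (by positivity)
              linarith
            calc 2*κ₀/(π*κ₁) * (1-u) = (2/π * (κ₀*(1-u))) * κ₁⁻¹ := by field_simp
              _ ≤ Real.sin (2*π - Θ u) * κ₁⁻¹ := by
                apply mul_le_mul_of_nonneg_right h6 (by positivity)
          have h7 : min (2*κ₀/(π*κ₁)) (κ₀*π/(2*κ₁^2)) * m ≤ 2*κ₀/(π*κ₁) * (1-u) :=
            mul_le_mul (min_le_left _ _) hm1u hm0.le (by positivity)
          linarith [hRgeNG]
      · have hmid := Lmid hc1.le hc2.le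
        constructor
        · have h2 : min (κ₀/π) (κ₀*π/κ₁^2) * m^2 ≤ (κ₀*π/κ₁^2) * (1/4) := by
            apply mul_le_mul (min_le_right _ _) (by nlinarith) (by positivity) (by positivity)
          have h3 : (κ₀*π/κ₁^2) * (1/4) = κ₀*π/(4*κ₁^2) := by ring
          linarith
        · have h2 : min (2*κ₀/(π*κ₁)) (κ₀*π/(2*κ₁^2)) * m ≤ (κ₀*π/(2*κ₁^2)) * (1/2) := by
            apply mul_le_mul (min_le_right _ _) hmhalf hm0.le (by positivity)
          have h3 : (κ₀*π/(2*κ₁^2)) * (1/2) = κ₀*π/(4*κ₁^2) := by ring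
          linarith [hRgeF]
  refine ⟨?_, ?_, ?_, ?_⟩
  · rw [htarget]; exact hmain.1
  · rw [htarget]
    rcases min_cases u (1-u) with ⟨h, _⟩ | ⟨h, _⟩
    · rw [hm, h]; exact U1
    · rw [hm, h]; exact U2
  · rw [hchordsq]; exact hmain.2
  · rw [hchordsq]; exact le_min D1 D2

lemma distT_eq (s₁ s₂ : ℝ) :
    distT s₁ s₂ = min (Int.fract (s₂ - s₁)) (1 - Int.fract (s₂ - s₁)) := by
  set d := s₂ - s₁ with hd
  set u := Int.fract d with hu
  have hu0 : 0 ≤ u := Int.fract_nonneg d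
  have hu1 : u < 1 := Int.fract_lt_one d
  have hfl : (⌊d⌋ : ℝ) + u = d := Int.floor_add_fract d
  have hbdd : BddBelow (Set.range fun n : ℤ => |d - (n:ℝ)|) := by
    refine ⟨0, ?_⟩
    rintro r ⟨n, rfl⟩
    positivity
  rw [distT]
  apply le_antisymm
  · apply le_min
    · have h := ciInf_le hbdd (⌊d⌋)
      have : |d - (⌊d⌋:ℝ)| = u := by
        rw [show d - (⌊d⌋:ℝ) = u by linarith]
        exact abs_of_nonneg hu0
      rwa [this] at h
    · have h := ciInf_le hbdd (⌊d⌋ + 1)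
      have : |d - ((⌊d⌋ + 1 : ℤ):ℝ)| = 1 - u := by
        push_cast
        rw [show d - ((⌊d⌋:ℝ) + 1) = -(1 - u) by linarith, abs_neg]
        exact abs_of_nonneg (by linarith)
      rwa [this] at h
  · apply le_ciInf
    intro n
    have hsplit : d - (n:ℝ) = u - ((n - ⌊d⌋ : ℤ) : ℝ) := by push_cast; linarith
    rw [hsplit]
    rcases le_or_gt (n - ⌊d⌋) 0 with hj | hj
    · have hjr : ((n - ⌊d⌋ : ℤ):ℝ) ≤ 0 := by exact_mod_cast hj
      have : u - ((n - ⌊d⌋ : ℤ):ℝ) ≥ u := by linarith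
      calc min u (1-u) ≤ u := min_le_left _ _
        _ ≤ |u - ((n - ⌊d⌋ : ℤ):ℝ)| := le_trans this (le_abs_self _)
    · have hjr : (1:ℝ) ≤ ((n - ⌊d⌋ : ℤ):ℝ) := by exact_mod_cast hj
      have h2 : u - ((n - ⌊d⌋ : ℤ):ℝ) ≤ -(1 - u) := by linarith
      calc min u (1-u) ≤ 1 - u := min_le_right _ _
        _ ≤ |u - ((n - ⌊d⌋ : ℤ):ℝ)| := by
            rw [abs_sub_comm]
            exact le_trans (by linarith) (le_abs_self _)

lemma proj_shift_deriv (γ : ℝ → EuclideanSpace ℝ (Fin 2)) (hγ : Differentiable ℝ γ)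
    (s₁ : ℝ) (i : Fin 2) (t : ℝ) :
    deriv (fun t => γ (s₁ + t) i) t = deriv γ (s₁ + t) i := by
  have h1 : HasDerivAt (fun t => γ (s₁ + t)) (deriv γ (s₁+t)) t :=
    ((hγ (s₁+t)).hasDerivAt).comp_const_add s₁ t
  have h2 : HasDerivAt (fun t => γ (s₁+t) i) (deriv γ (s₁+t) i) t := by
    have := (EuclideanSpace.proj i).hasFDerivAt.comp_hasDerivAt t h1
    exact this
  exact h2.deriv

/-- Angle estimate: for a unit-speed `1`-periodic `C²` plane curve with curvature pinched
in `[κ₀, κ₁]` and total curvature `2π`, and `s₂ - s₁ ∉ ℤ`, the quantity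
`|det(γ'(s₁), γ(s₂) - γ(s₁))|` (which is `sin` of the tangent–chord angle times the chord
length) is comparable to `dist_𝕋(s₁, s₂)·‖γ(s₂) - γ(s₁)‖`, with constant depending only
on `κ₀, κ₁`. -/
theorem stmt12 (κ₀ κ₁ : ℝ) (h0 : 0 < κ₀) (h01 : κ₀ ≤ κ₁) :
    ∃ C : ℝ, 1 < C ∧
      ∀ γ : ℝ → EuclideanSpace ℝ (Fin 2),
        ContDiff ℝ 2 γ → (∀ s, γ (s + 1) = γ s) → (∀ s, ‖deriv γ s‖ = 1) →
        (∀ s, κ₀ ≤ curv γ s) → (∀ s, curv γ s ≤ κ₁) →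
        (∫ s in (0:ℝ)..1, curv γ s) = 2 * π →
        ∀ s₁ s₂ : ℝ, (¬ ∃ n : ℤ, s₂ - s₁ = (n : ℝ)) →
          C⁻¹ * (distT s₁ s₂ * ‖γ s₂ - γ s₁‖)
              ≤ |deriv γ s₁ 0 * (γ s₂ - γ s₁) 1 - deriv γ s₁ 1 * (γ s₂ - γ s₁) 0| ∧
            |deriv γ s₁ 0 * (γ s₂ - γ s₁) 1 - deriv γ s₁ 1 * (γ s₂ - γ s₁) 0|
              ≤ C * (distT s₁ s₂ * ‖γ s₂ - γ s₁‖) := by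
  have hπ : (0:ℝ) < π := Real.pi_pos
  have hκ₁ : (0:ℝ) < κ₁ := lt_of_lt_of_le h0 h01
  set cA := min (κ₀/π) (κ₀*π/κ₁^2) with hcA
  set c₁ := min (2*κ₀/(π*κ₁)) (κ₀*π/(2*κ₁^2)) with hc₁
  have hcA0 : 0 < cA := lt_min (by positivity) (by positivity)
  have hc₁0 : 0 < c₁ := lt_min (by positivity) (by positivity)
  set C := max 2 (max cA⁻¹ (κ₁/(2*c₁))) with hC
  have hC2 : (2:ℝ) ≤ C := le_max_left _ _
  have hCA : cA⁻¹ ≤ C := le_trans (le_max_left _ _) (le_max_right _ _)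
  have hCB : κ₁/(2*c₁) ≤ C := le_trans (le_max_right _ _) (le_max_right _ _)
  have hC0 : (0:ℝ) < C := by linarith
  have hCinv : C⁻¹ ≤ cA := by
    rw [show cA = (cA⁻¹)⁻¹ by rw [inv_inv]]
    exact inv_anti₀ (by positivity) hCA
  refine ⟨C, by linarith, ?_⟩
  intro γ hγ hper hnorm hκl hκu htot s₁ s₂ hnz
  set d := s₂ - s₁ with hd
  set u := Int.fract d with hu
  have hu0 : 0 < u := by
    rw [hu]
    rw [Int.fract_pos]
    intro hcon
    exact hnz ⟨⌊d⌋, hcon⟩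
  have hu1 : u < 1 := Int.fract_lt_one d
  have hperiodic : Function.Periodic γ 1 := hper
  have hs2 : γ s₂ = γ (s₁ + u) := by
    have hP := (hperiodic.int_mul ⌊d⌋) (s₁ + u)
    have harg : s₁ + u + (⌊d⌋:ℝ) * 1 = s₂ := by
      have := Int.floor_add_fract d
      rw [← hu] at this
      rw [hd] at this ⊢
      linarith
    rw [← harg, hP]
  -- coordinates
  set x : ℝ → ℝ := fun t => γ (s₁ + t) 0 with hxdef
  set y : ℝ → ℝ := fun t => γ (s₁ + t) 1 with hydef
  have hγdiff : Differentiable ℝ γ := hγ.differentiable (by norm_num)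
  have hγ2 : ContDiff ℝ (1+1) γ := by norm_num [hγ]
  have hdγdiff : Differentiable ℝ (deriv γ) := by
    obtain ⟨-, -, h1⟩ := contDiff_succ_iff_deriv.mp hγ2
    exact h1.differentiable (by norm_num)
  have hγshift : ContDiff ℝ 2 (fun t => γ (s₁ + t)) :=
    hγ.comp ((contDiff_const.add contDiff_id) : ContDiff ℝ 2 fun t : ℝ => s₁ + t)
  have hxc : ContDiff ℝ 2 x := by exact (EuclideanSpace.proj (0 : Fin 2)).contDiff.comp hγshift
  have hyc : ContDiff ℝ 2 y := by exact (EuclideanSpace.proj (1 : Fin 2)).contDiff.comp hγshift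
  have hdx : ∀ t, deriv x t = deriv γ (s₁ + t) 0 := proj_shift_deriv γ hγdiff s₁ 0
  have hdy : ∀ t, deriv y t = deriv γ (s₁ + t) 1 := proj_shift_deriv γ hγdiff s₁ 1
  have hddx : ∀ t, deriv (deriv x) t = deriv (deriv γ) (s₁ + t) 0 := by
    intro t
    rw [show deriv x = fun t => deriv γ (s₁ + t) 0 from funext hdx]
    exact proj_shift_deriv (deriv γ) hdγdiff s₁ 0 t
  have hddy : ∀ t, deriv (deriv y) t = deriv (deriv γ) (s₁ + t) 1 := by
    intro t
    rw [show deriv y = fun t => deriv γ (s₁ + t) 1 from funext hdy]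
    exact proj_shift_deriv (deriv γ) hdγdiff s₁ 1 t
  -- curvature transfer
  set K : ℝ → ℝ := fun t => curv γ (s₁ + t) with hKdef
  have hKeq : ∀ s, K s = deriv x s * deriv (deriv y) s - deriv y s * deriv (deriv x) s := by
    intro s
    simp only [hKdef, curv, hdx, hdy, hddx, hddy]
  -- unit speed
  have hunit : ∀ s, (deriv x s)^2 + (deriv y s)^2 = 1 := by
    intro s
    have h1 := hnorm (s₁ + s)
    rw [EuclideanSpace.norm_eq] at h1
    have h2 := Real.sqrt_eq_one.mp h1
    rw [Fin.sum_univ_two] at h2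
    rw [hdx, hdy]
    simpa [Real.norm_eq_abs, sq_abs] using h2
  -- periodicity of curvature
  have hperd : ∀ s, deriv γ (s+1) = deriv γ s := by
    intro s
    calc deriv γ (s+1) = deriv (fun t => γ (t+1)) s := (deriv_comp_add_const γ 1 s).symm
      _ = deriv γ s := by rw [show (fun t => γ (t+1)) = γ from funext hper]
  have hperdd : ∀ s, deriv (deriv γ) (s+1) = deriv (deriv γ) s := by
    intro s
    calc deriv (deriv γ) (s+1) = deriv (fun t => deriv γ (t+1)) s :=
          (deriv_comp_add_const (deriv γ) 1 s).symm
      _ = deriv (deriv γ) s := by rw [show (fun t => deriv γ (t+1)) = deriv γ from funext hperd]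
  have hcurvper : Function.Periodic (curv γ) 1 := by
    intro s
    simp only [curv, hperd, hperdd]
  have htotK : (∫ s in (0:ℝ)..1, K s) = 2*π := by
    have h1 : (∫ s in (0:ℝ)..1, curv γ (s₁ + s)) = ∫ s in (s₁+0)..(s₁+1), curv γ s :=
      intervalIntegral.integral_comp_add_left (fun s => curv γ s) s₁
    have h2 : (∫ s in s₁..s₁+1, curv γ s) = ∫ s in (0:ℝ)..0+1, curv γ s :=
      hcurvper.intervalIntegral_add_eq s₁ 0
    simp only [hKdef]
    rw [h1]
    rw [show s₁ + 0 = s₁ from add_zero s₁, h2]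
    rw [show (0:ℝ)+1 = 1 by norm_num]
    exact htot
  have hperx : x 1 = x 0 := by
    simp only [hxdef]
    rw [hper s₁, add_zero]
  have hpery : y 1 = y 0 := by
    simp only [hydef]
    rw [hper s₁, add_zero]
  obtain ⟨hlow, hup, hclow, hcup⟩ := core κ₀ κ₁ h0 h01 x y K hxc hyc hKeq hperx hpery hunit
    (fun s => hκl _) (fun s => hκu _) htotK u hu0 hu1
  set m := min u (1-u) with hm
  have hm0 : 0 < m := lt_min hu0 (by linarith)
  have hdistT : distT s₁ s₂ = m := by rw [distT_eq s₁ s₂, ← hd, ← hu, hm]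
  have hchord : ‖γ s₂ - γ s₁‖ = Real.sqrt ((x u - x 0)^2 + (y u - y 0)^2) := by
    rw [hs2, EuclideanSpace.norm_eq, Fin.sum_univ_two]
    congr 1
    simp only [hxdef, hydef, add_zero, PiLp.sub_apply, Real.norm_eq_abs, sq_abs]
  have htargeteq : deriv γ s₁ 0 * (γ s₂ - γ s₁) 1 - deriv γ s₁ 1 * (γ s₂ - γ s₁) 0
      = deriv x 0 * (y u - y 0) - deriv y 0 * (x u - x 0) := by
    rw [hs2, hdx 0, hdy 0]
    simp only [PiLp.sub_apply, hdx 0, hdy 0, hxdef, hydef, add_zero]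
  set T := deriv x 0 * (y u - y 0) - deriv y 0 * (x u - x 0) with hT
  set R := Real.sqrt ((x u - x 0)^2 + (y u - y 0)^2) with hR
  have hR0 : 0 ≤ R := Real.sqrt_nonneg _
  have hTpos : 0 < T := lt_of_lt_of_le (mul_pos hcA0 (pow_pos hm0 2)) hlow
  rw [htargeteq, hdistT, hchord, abs_of_pos hTpos]
  constructor
  · have k1 : C⁻¹ * (m * R) ≤ cA * (m * R) :=
      mul_le_mul_of_nonneg_right hCinv (by positivity)
    have k2 : cA * (m * R) ≤ cA * (m * m) := by
      apply mul_le_mul_of_nonneg_left _ hcA0.le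
      exact mul_le_mul_of_nonneg_left hcup hm0.le
    have k3 : cA * (m * m) ≤ T := by
      have he : cA * (m * m) = cA * m^2 := by ring
      linarith [hlow, he]
    linarith
  · have k1 : T ≤ κ₁/(2*c₁) * (m * (c₁ * m)) := by
      have : κ₁/(2*c₁) * (m * (c₁ * m)) = κ₁/2 * m^2 := by
        field_simp
      rw [this]; exact hup
    have k2 : κ₁/(2*c₁) * (m * (c₁ * m)) ≤ κ₁/(2*c₁) * (m * R) := by
      apply mul_le_mul_of_nonneg_left _ (by positivity)
      exact mul_le_mul_of_nonneg_left hclow hm0.le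
    have k3 : κ₁/(2*c₁) * (m * R) ≤ C * (m * R) :=
      mul_le_mul_of_nonneg_right hCB (by positivity)
    linarith
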